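/- Let α ∈ ℝ with α ≠ 0, let z : ℕ → ℝ be strictly increasing with z(k) → ∞, and let a : ℕ → ℝ be a summable sequence with a(k) > 0 for all k. Then for every k ∈ ℕ there exists exactly one μ in the open interval (z(k), z(k+1)) such that 1 + α·∑_{j} a(j)/(z(j) − μ) = 0. -/

import Mathlib

open Set

private lemma div_lt_div_same_num_aux {c x y : ℝ} (hc : 0 < c) (h : y < x) (hxy : 0 < x * y) :
    c / x < c / y := by
  have hx : x ≠ 0 := fun hx0 => by simp [hx0] at hxy
  have hy : y ≠ 0 := fun hy0 => by simp [hy0] at hxy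
  have key : c / x - c / y = c * (y - x) / (x * y) := by field_simp
  have h2 : c * (y - x) / (x * y) < 0 :=
    div_neg_of_neg_of_pos (by nlinarith) hxy
  linarith

theorem stmt11 (α : ℝ) (hα : α ≠ 0) (z : ℕ → ℝ) (hz : StrictMono z)
    (hztop : Filter.Tendsto z Filter.atTop Filter.atTop)
    (a : ℕ → ℝ) (ha : Summable a) (hpos : ∀ j, 0 < a j) (k : ℕ) :
    ∃! μ : ℝ, μ ∈ Set.Ioo (z k) (z (k + 1)) ∧
      1 + α * ∑' j : ℕ, a j / (z j - μ) = 0 := by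
  have hk1 : z k < z (k + 1) := hz (lt_add_one k)
  set t : ℝ := -α⁻¹ with ht
  clear_value t
  have hQiff : ∀ x : ℝ, (1 + α * x = 0 ↔ x = t) := by
    intro x
    constructor
    · intro h
      have h2 : α * x = -1 := by linarith
      have h3 : x = α⁻¹ * (α * x) := by field_simp
      rw [h2] at h3
      rw [h3, ht]; ring
    · intro h
      rw [h, ht]
      field_simp
      norm_num
  -- distance bound
  have hdist : ∀ μ ∈ Ioo (z k) (z (k + 1)), ∀ j,
      min (μ - z k) (z (k + 1) - μ) ≤ |z j - μ| := by
    rintro μ ⟨h1, h2⟩ j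
    rcases le_or_gt j k with hj | hj
    · have hzj : z j ≤ z k := hz.monotone hj
      rw [abs_of_neg (by linarith)]
      calc min (μ - z k) (z (k + 1) - μ) ≤ μ - z k := min_le_left _ _
        _ ≤ -(z j - μ) := by linarith
    · have hzj : z (k + 1) ≤ z j := hz.monotone hj
      rw [abs_of_pos (by linarith)]
      calc min (μ - z k) (z (k + 1) - μ) ≤ z (k + 1) - μ := min_le_right _ _
        _ ≤ z j - μ := by linarith
  -- summability
  have hsum : ∀ μ ∈ Ioo (z k) (z (k + 1)), Summable (fun j => a j / (z j - μ)) := by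
    rintro μ hμ
    obtain ⟨h1, h2⟩ := hμ
    set δ := min (μ - z k) (z (k + 1) - μ) with hδ
    have hδpos : 0 < δ := lt_min (by linarith) (by linarith)
    apply Summable.of_norm_bounded (ha.div_const δ)
    intro j
    have hd := hdist μ ⟨h1, h2⟩ j
    rw [Real.norm_eq_abs, abs_div, abs_of_pos (hpos j)]
    exact div_le_div_of_nonneg_left (hpos j).le hδpos hd
  -- strict monotonicity
  have hmono : ∀ μ₁ ∈ Ioo (z k) (z (k + 1)), ∀ μ₂ ∈ Ioo (z k) (z (k + 1)), μ₁ < μ₂ →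
      (∑' j, a j / (z j - μ₁)) < ∑' j, a j / (z j - μ₂) := by
    rintro μ₁ ⟨h1a, h1b⟩ μ₂ ⟨h2a, h2b⟩ hlt
    have key : ∀ j, a j / (z j - μ₁) < a j / (z j - μ₂) := by
      intro j
      apply div_lt_div_same_num_aux (hpos j) (by linarith)
      rcases le_or_gt j k with hj | hj
      · have hzj : z j ≤ z k := hz.monotone hj
        exact mul_pos_of_neg_of_neg (by linarith) (by linarith)
      · have hzj : z (k + 1) ≤ z j := hz.monotone hj
        exact mul_pos (by linarith) (by linarith)
    exact Summable.tsum_lt_tsum (i := k) (fun j => (key j).le) (key k)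
      (hsum μ₁ ⟨h1a, h1b⟩) (hsum μ₂ ⟨h2a, h2b⟩)
  -- continuity on compact subintervals
  have hcont : ∀ c d : ℝ, z k < c → d < z (k + 1) →
      ContinuousOn (fun x => ∑' j, a j / (z j - x)) (Icc c d) := by
    intro c d hc hd
    set δ := min (c - z k) (z (k + 1) - d) with hδ
    have hδpos : 0 < δ := lt_min (by linarith) (by linarith)
    have hb : ∀ (j : ℕ) (x : ℝ), x ∈ Icc c d → δ ≤ |z j - x| := by
      rintro j x ⟨hx1, hx2⟩
      have hxI : x ∈ Ioo (z k) (z (k + 1)) := ⟨by linarith, by linarith⟩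
      have h1 := hdist x hxI j
      have h2 : δ ≤ min (x - z k) (z (k + 1) - x) :=
        le_min (le_trans (min_le_left _ _) (by linarith))
          (le_trans (min_le_right _ _) (by linarith))
      linarith
    apply continuousOn_tsum (u := fun j => a j / δ)
    · intro j
      apply ContinuousOn.div continuousOn_const
        ((continuous_const.sub continuous_id).continuousOn)
      intro x hx
      have h := hb j x hx
      intro h0
      simp only [Pi.sub_apply, id_eq] at h0
      rw [h0, abs_zero] at h
      linarith
    · exact ha.div_const δ
    · intro j x hx
      rw [Real.norm_eq_abs, abs_div, abs_of_pos (hpos j)]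
      exact div_le_div_of_nonneg_left (hpos j).le hδpos (hb j x hx)
  set A := ∑' j, a j with hA
  set m := (z k + z (k + 1)) / 2 with hm
  clear_value A m
  have hm1 : z k < m := by rw [hm]; linarith
  have hm2 : m < z (k + 1) := by rw [hm]; linarith
  -- value below t near z k
  have hupper : ∃ μ₁ ∈ Ioo (z k) m, (∑' j, a j / (z j - μ₁)) < t := by
    set D := z (k + 1) - m with hD
    have hDpos : 0 < D := by rw [hD]; linarith
    set T := t - A / D with hT
    clear_value T
    have hTpos : (0 : ℝ) < |T| + 1 := by positivity
    set ε := min ((m - z k) / 2) (a k / (|T| + 1)) with hε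
    clear_value ε
    have hεpos : 0 < ε := by
      rw [hε]
      apply lt_min
      · linarith
      · exact div_pos (hpos k) hTpos
    set μ₁ := z k + ε with hμ₁
    have hεle : ε ≤ (m - z k) / 2 := by rw [hε]; exact min_le_left _ _
    have hμ₁m : μ₁ < m := by rw [hμ₁]; linarith
    have hμ₁I : μ₁ ∈ Ioo (z k) m := ⟨by rw [hμ₁]; linarith, hμ₁m⟩
    have hμ₁I' : μ₁ ∈ Ioo (z k) (z (k + 1)) := ⟨hμ₁I.1, by linarith [hμ₁I.2]⟩
    have hsum2 : Summable (fun j => a j / D + (if j = k then a k / (z k - μ₁) else 0)) :=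
      (ha.div_const D).add (hasSum_ite_eq k _).summable
    have hle : ∀ j, a j / (z j - μ₁) ≤ a j / D + (if j = k then a k / (z k - μ₁) else 0) := by
      intro j
      rcases eq_or_ne j k with hjk | hjk
      · rw [if_pos hjk, hjk]
        have h0 : 0 ≤ a k / D := (div_pos (hpos k) hDpos).le
        linarith
      · rw [if_neg hjk, add_zero]
        rcases lt_or_gt_of_ne hjk with hj | hj
        · have hzj : z j < z k := hz hj
          have hneg : a j / (z j - μ₁) < 0 :=
            div_neg_of_pos_of_neg (hpos j) (by have := hμ₁I.1; linarith)
          have h0 : 0 ≤ a j / D := (div_pos (hpos j) hDpos).le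
          linarith
        · have hzj : z (k + 1) ≤ z j := hz.monotone hj
          have hden : D ≤ z j - μ₁ := by rw [hD]; linarith
          exact div_le_div_of_nonneg_left (hpos j).le hDpos hden
    have hbound : (∑' j, a j / (z j - μ₁)) ≤ A / D + a k / (z k - μ₁) := by
      calc (∑' j, a j / (z j - μ₁))
          ≤ ∑' j, (a j / D + (if j = k then a k / (z k - μ₁) else 0)) :=
            Summable.tsum_le_tsum hle (hsum μ₁ hμ₁I') hsum2
        _ = A / D + a k / (z k - μ₁) := by
            rw [Summable.tsum_add (ha.div_const D) (hasSum_ite_eq k _).summable,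
              tsum_div_const, (hasSum_ite_eq k _).tsum_eq, ← hA]
    have hak : |T| + 1 ≤ a k / ε := by
      rw [le_div_iff₀ hεpos]
      have h := (le_div_iff₀ hTpos).mp (hε ▸ min_le_right ((m - z k) / 2) (a k / (|T| + 1)))
      nlinarith
    have hzkμ : a k / (z k - μ₁) = -(a k / ε) := by
      rw [hμ₁]
      rw [show z k - (z k + ε) = -ε by ring, div_neg]
    refine ⟨μ₁, hμ₁I, ?_⟩
    have habs : -|T| ≤ T := neg_abs_le T
    have hTT : T = t - A / D := hT
    rw [hzkμ] at hbound
    have hfin : A / D + -(a k / ε) ≤ A / D - |T| - 1 := by linarith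
    have hfin2 : A / D - |T| - 1 < A / D + T := by linarith
    have hfin3 : A / D + T = t := by rw [hTT]; ring
    linarith
  -- value above t near z (k+1)
  have hlower : ∃ μ₂ ∈ Ioo m (z (k + 1)), t < ∑' j, a j / (z j - μ₂) := by
    set D := m - z k with hD
    have hDpos : 0 < D := by rw [hD]; linarith
    set T := t + A / D with hT
    clear_value T
    have hTpos : (0 : ℝ) < |T| + 1 := by positivity
    set ε := min ((z (k + 1) - m) / 2) (a (k + 1) / (|T| + 1)) with hε
    clear_value ε
    have hεpos : 0 < ε := by
      rw [hε]
      apply lt_min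
      · linarith
      · exact div_pos (hpos (k + 1)) hTpos
    set μ₂ := z (k + 1) - ε with hμ₂
    have hεle : ε ≤ (z (k + 1) - m) / 2 := by rw [hε]; exact min_le_left _ _
    have hμ₂m : m < μ₂ := by rw [hμ₂]; linarith
    have hμ₂I : μ₂ ∈ Ioo m (z (k + 1)) := ⟨hμ₂m, by rw [hμ₂]; linarith⟩
    have hμ₂I' : μ₂ ∈ Ioo (z k) (z (k + 1)) := ⟨by linarith [hμ₂I.1], hμ₂I.2⟩
    have hsum2 : Summable
        (fun j => -(a j / D) + (if j = k + 1 then a (k + 1) / (z (k + 1) - μ₂) else 0)) :=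
      ((ha.div_const D).neg).add (hasSum_ite_eq (k + 1) _).summable
    have hle : ∀ j, -(a j / D) + (if j = k + 1 then a (k + 1) / (z (k + 1) - μ₂) else 0)
        ≤ a j / (z j - μ₂) := by
      intro j
      rcases eq_or_ne j (k + 1) with hjk | hjk
      · rw [if_pos hjk, hjk]
        have h0 : 0 ≤ a (k + 1) / D := (div_pos (hpos (k + 1)) hDpos).le
        linarith
      · rw [if_neg hjk, add_zero]
        rcases lt_or_gt_of_ne hjk with hj | hj
        · have hj' : j ≤ k := Nat.lt_succ_iff.mp hj
          have hzj : z j ≤ z k := hz.monotone hj'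
          have hden : D ≤ μ₂ - z j := by rw [hD]; linarith [hμ₂I.1]
          have h1 : a j / (μ₂ - z j) ≤ a j / D :=
            div_le_div_of_nonneg_left (hpos j).le hDpos hden
          have h2 : a j / (z j - μ₂) = -(a j / (μ₂ - z j)) := by
            rw [show z j - μ₂ = -(μ₂ - z j) by ring, div_neg]
          rw [h2]
          linarith
        · have hzj : z (k + 1) < z j := hz hj
          have hposterm : 0 < a j / (z j - μ₂) :=
            div_pos (hpos j) (by linarith [hμ₂I.2])
          have h0 : 0 ≤ a j / D := (div_pos (hpos j) hDpos).le
          linarith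
    have hbound : -(A / D) + a (k + 1) / (z (k + 1) - μ₂) ≤ ∑' j, a j / (z j - μ₂) := by
      calc -(A / D) + a (k + 1) / (z (k + 1) - μ₂)
          = ∑' j, (-(a j / D) + (if j = k + 1 then a (k + 1) / (z (k + 1) - μ₂) else 0)) := by
            rw [Summable.tsum_add ((ha.div_const D).neg) (hasSum_ite_eq (k + 1) _).summable,
              tsum_neg, tsum_div_const, (hasSum_ite_eq (k + 1) _).tsum_eq, ← hA]
        _ ≤ ∑' j, a j / (z j - μ₂) := Summable.tsum_le_tsum hle hsum2 (hsum μ₂ hμ₂I')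
    have hak : |T| + 1 ≤ a (k + 1) / ε := by
      rw [le_div_iff₀ hεpos]
      have h := (le_div_iff₀ hTpos).mp
        (hε ▸ min_le_right ((z (k + 1) - m) / 2) (a (k + 1) / (|T| + 1)))
      nlinarith
    have hzkμ : a (k + 1) / (z (k + 1) - μ₂) = a (k + 1) / ε := by
      rw [hμ₂, show z (k + 1) - (z (k + 1) - ε) = ε by ring]
    refine ⟨μ₂, hμ₂I, ?_⟩
    have habs : T ≤ |T| := le_abs_self T
    have hTT : T = t + A / D := hT
    rw [hzkμ] at hbound
    have hfin : -(A / D) + (|T| + 1) ≤ -(A / D) + a (k + 1) / ε := by linarith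
    have hfin2 : -(A / D) + T < -(A / D) + (|T| + 1) := by linarith
    have hfin3 : -(A / D) + T = t := by rw [hTT]; ring
    linarith
  obtain ⟨μ₁, hμ₁, hf₁⟩ := hupper
  obtain ⟨μ₂, hμ₂, hf₂⟩ := hlower
  have hμ₁I : μ₁ ∈ Ioo (z k) (z (k + 1)) := ⟨hμ₁.1, lt_trans hμ₁.2 hm2⟩
  have hμ₂I : μ₂ ∈ Ioo (z k) (z (k + 1)) := ⟨lt_trans hm1 hμ₂.1, hμ₂.2⟩
  have h12 : μ₁ < μ₂ := lt_trans hμ₁.2 hμ₂.1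
  have hivt := intermediate_value_Ioo h12.le (hcont μ₁ μ₂ hμ₁I.1 hμ₂I.2)
  obtain ⟨μ, hμmem, hμval⟩ := hivt (⟨hf₁, hf₂⟩ : t ∈ Ioo _ _)
  simp only at hμval
  have hμI : μ ∈ Ioo (z k) (z (k + 1)) :=
    ⟨lt_trans hμ₁I.1 hμmem.1, lt_trans hμmem.2 hμ₂I.2⟩
  refine ⟨μ, ⟨hμI, (hQiff _).mpr hμval⟩, ?_⟩
  rintro y ⟨hyI, hyQ⟩
  have hyt : (∑' j, a j / (z j - y)) = t := (hQiff _).mp hyQ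
  by_contra hne
  rcases lt_or_gt_of_ne hne with h | h
  · have := hmono y hyI μ hμI h
    rw [hyt, hμval] at this
    exact lt_irrefl t this
  · have := hmono μ hμI y hyI h
    rw [hyt, hμval] at this
    exact lt_irrefl t this
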